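/- arXiv:1703.08790 — 3 statements merged into one kernel-verified Lean document; each statement's English description precedes it below -/
import Mathlib

section
/- Let m be a positive integer and let E₁, ..., E_m be independent exponential random variables, each with mean at least A > 0. Then for any 0 ≤ κ ≤ 1/4, P(∑_{i=1}^m E_i ≤ κ·A·m) ≤ (4/(3·√(2πm)))·(3κ)^m. -/
open scoped ENNReal
open MeasureTheory ProbabilityTheory Real


theorem stirling_lb (m : ℕ) (hm : 0 < m) :
    Real.sqrt (2 * Real.pi * m) * (m / Real.exp 1) ^ m ≤ (Nat.factorial m : ℝ) := by
  obtain ⟨n, rfl⟩ := Nat.exists_eq_succ_of_ne_zero hm.ne'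
  simp only [Nat.succ_eq_add_one, Nat.cast_add, Nat.cast_one]
  show Real.sqrt (2 * Real.pi * (n+1)) * (((n:ℝ)+1) / Real.exp 1) ^ (n+1) ≤ (Nat.factorial (n+1) : ℝ)
  have hspos : 0 < Stirling.stirlingSeq (n + 1) := by
    rw [Stirling.stirlingSeq]
    positivity
  have h1 : Real.sqrt Real.pi ≤ Stirling.stirlingSeq (n + 1) := by
    have ha := Stirling.log_stirlingSeq'_antitone
    have ht : Filter.Tendsto (Real.log ∘ Stirling.stirlingSeq ∘ Nat.succ) Filter.atTop
        (nhds (Real.log (Real.sqrt Real.pi))) :=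
      ((Real.continuousAt_log (by positivity)).tendsto.comp
        (Stirling.tendsto_stirlingSeq_sqrt_pi.comp (Filter.tendsto_add_atTop_nat 1)))
    have := ha.le_of_tendsto ht n
    have hlog : Real.log (Real.sqrt Real.pi) ≤ Real.log (Stirling.stirlingSeq (n + 1)) := this
    exact (Real.log_le_log_iff (by positivity) hspos).mp hlog
  have key : Stirling.stirlingSeq (n+1) * (Real.sqrt (2 * (n+1)) * ((n+1) / Real.exp 1) ^ (n+1))
      = (Nat.factorial (n+1) : ℝ) := by
    rw [Stirling.stirlingSeq]
    have hpos : (0:ℝ) < Real.sqrt (2 * (n+1)) * ((n+1) / Real.exp 1) ^ (n+1) := by positivity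
    field_simp
    norm_num
  calc Real.sqrt (2 * Real.pi * (n+1)) * ((n+1) / Real.exp 1) ^ (n+1)
      = Real.sqrt Real.pi * (Real.sqrt (2 * (n+1)) * ((n+1) / Real.exp 1) ^ (n+1)) := by
        rw [← mul_assoc, ← Real.sqrt_mul (by positivity)]
        ring_nf
    _ ≤ Stirling.stirlingSeq (n+1) * (Real.sqrt (2 * (n+1)) * ((n+1) / Real.exp 1) ^ (n+1)) := by
        gcongr
    _ = _ := key


theorem arith (m : ℕ) (hm : 0 < m) (κ A : ℝ) (hκ0 : 0 ≤ κ) (hA : 0 < A) :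
    (κ * A * m) ^ m / (A ^ m * (Nat.factorial m : ℝ)) ≤
      4 / (3 * Real.sqrt (2 * Real.pi * m)) * (3 * κ) ^ m := by
  have hm' : (0:ℝ) < m := by exact_mod_cast hm
  have hs : (0:ℝ) < Real.sqrt (2 * Real.pi * m) := by
    apply Real.sqrt_pos.mpr; positivity
  have hden : (0:ℝ) < Real.sqrt (2 * Real.pi * m) * (m / Real.exp 1) ^ m := by positivity
  have h1 : (κ * A * m) ^ m / (A ^ m * (Nat.factorial m : ℝ))
      = κ ^ m * m ^ m / (Nat.factorial m : ℝ) := by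
    have : (0:ℝ) < A ^ m := by positivity
    field_simp
    ring
  rw [h1]
  calc κ ^ m * m ^ m / (Nat.factorial m : ℝ)
      ≤ κ ^ m * m ^ m / (Real.sqrt (2 * Real.pi * m) * (m / Real.exp 1) ^ m) := by
        apply div_le_div_of_nonneg_left (by positivity) hden (stirling_lb m hm)
    _ = κ ^ m * Real.exp 1 ^ m / Real.sqrt (2 * Real.pi * m) := by
        rw [div_pow]
        field_simp
    _ ≤ κ ^ m * ((4/3) * 3 ^ m) / Real.sqrt (2 * Real.pi * m) := by
        gcongr
        calc Real.exp 1 ^ m ≤ 3 ^ m := by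
              gcongr
              exact (Real.exp_one_lt_d9.le.trans (by norm_num))
          _ ≤ (4/3) * 3 ^ m := by nlinarith [pow_pos (by norm_num : (0:ℝ) < 3) m]
    _ = 4 / (3 * Real.sqrt (2 * Real.pi * m)) * (3 * κ) ^ m := by
        rw [mul_pow]
        field_simp


theorem key_bound {Ω : Type*} [MeasurableSpace Ω] (P : Measure Ω) [IsProbabilityMeasure P]
    {m : ℕ} (E : Fin m → Ω → ℝ) (μ : Fin m → ℝ) (A : ℝ) (hA : 0 < A)
    (hmean : ∀ i, A ≤ μ i) (hmeas : ∀ i, Measurable (E i))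
    (hindep : iIndepFun E P)
    (hdist : ∀ i, Measure.map (E i) P = expMeasure (1 / μ i)) :
    ∀ (s : Finset (Fin m)) (t : ℝ),
      P {ω | ∑ i ∈ s, E i ω ≤ t} ≤
        if t < 0 then 0 else
          ENNReal.ofReal (t ^ s.card / (A ^ s.card * (Nat.factorial s.card : ℝ))) := by
  intro s
  induction s using Finset.cons_induction_on with
  | empty =>
    intro t
    by_cases ht : t < 0
    · rw [if_pos ht]
      have : {ω : Ω | ∑ i ∈ (∅ : Finset (Fin m)), E i ω ≤ t} = ∅ := by
        ext ω; simp [not_le.2 ht]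
      rw [this]; simp
    · rw [if_neg ht]
      simp only [Finset.card_empty, pow_zero, Nat.factorial_zero, Nat.cast_one, mul_one, div_one]
      rw [ENNReal.ofReal_one]
      exact prob_le_one
  | cons i s hi IH =>
    intro t
    set n := s.card with hn
    have hXmeas : Measurable (fun ω => ∑ j ∈ s, E j ω) :=
      Finset.measurable_sum s (fun j _ => hmeas j)
    have hμi : 0 < μ i := hA.trans_le (hmean i)
    have hYX : IndepFun (E i) (fun ω => ∑ j ∈ s, E j ω) P := by
      have h := hindep.indepFun_finsetSum_of_notMem hmeas hi
      have hs : (∑ j ∈ s, E j) = fun ω => ∑ j ∈ s, E j ω := by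
        ext ω; simp [Finset.sum_apply]
      rw [hs] at h; exact h.symm
    have hset : MeasurableSet {p : ℝ × ℝ | p.1 + p.2 ≤ t} :=
      measurableSet_le (measurable_fst.add measurable_snd) measurable_const
    have step1 : P {ω | ∑ j ∈ Finset.cons i s hi, E j ω ≤ t}
        = ((P.map (E i)).prod (P.map (fun ω => ∑ j ∈ s, E j ω))) {p : ℝ × ℝ | p.1 + p.2 ≤ t} := by
      rw [← (indepFun_iff_map_prod_eq_prod_map_map (hmeas i).aemeasurable hXmeas.aemeasurable).mp
        hYX, Measure.map_apply ((hmeas i).prodMk hXmeas) hset]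
      congr 1; ext ω; simp [Finset.sum_cons, Finset.sum_insert hi]
    have step2 : ((P.map (E i)).prod (P.map (fun ω => ∑ j ∈ s, E j ω))) {p : ℝ × ℝ | p.1 + p.2 ≤ t}
        = ∫⁻ y, (P.map (fun ω => ∑ j ∈ s, E j ω)) {x | y + x ≤ t} ∂(P.map (E i)) := by
      rw [Measure.prod_apply hset]; rfl
    -- the ENNReal-valued bound function
    set B : ℕ → ℝ → ℝ≥0∞ := fun k u => if u < 0 then 0 else
        ENNReal.ofReal (u ^ k / (A ^ k * (Nat.factorial k : ℝ))) with hB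
    have slice : ∀ y : ℝ, (P.map (fun ω => ∑ j ∈ s, E j ω)) {x | y + x ≤ t} ≤ B n (t - y) := by
      intro y
      have hseteq : {x : ℝ | y + x ≤ t} = Set.Iic (t - y) := by
        ext x; simp only [Set.mem_setOf_eq, Set.mem_Iic]; constructor <;> intro h <;> linarith
      rw [hseteq, Measure.map_apply hXmeas measurableSet_Iic]
      exact IH (t - y)
    set C : ℝ := 1 / (A ^ n * (Nat.factorial n : ℝ) * A) with hC
    set r : ℝ := 1 / μ i with hr
    have hrpos : 0 < r := by rw [hr]; positivity
    have hBmeas : Measurable (B n) := by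
      rw [hB]
      exact Measurable.ite measurableSet_Iio measurable_const
        (((measurable_id.pow_const n).div_const _).ennreal_ofReal)
    have hgmeas : Measurable (fun y : ℝ => B n (t - y)) :=
      hBmeas.comp (measurable_const.sub measurable_id)
    have hexp : Measure.map (E i) P = volume.withDensity (exponentialPDF r) := hdist i
    have step3 : ∫⁻ y, B n (t - y) ∂(Measure.map (E i) P)
        = ∫⁻ y, exponentialPDF r y * B n (t - y) ∂volume := by
      rw [hexp]
      have hpm : Measurable (exponentialPDF r) := by
        unfold exponentialPDF
        exact (measurable_exponentialPDFReal r).ennreal_ofReal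
      exact lintegral_withDensity_eq_lintegral_mul volume hpm hgmeas
    have hptwise : ∀ y : ℝ, exponentialPDF r y * B n (t - y) ≤
        (Set.Icc 0 t).indicator (fun y => ENNReal.ofReal ((t - y) ^ n * C)) y := by
      intro y
      rcases lt_or_ge y 0 with hy | hy
      · rw [exponentialPDF_of_neg hy, zero_mul]; exact zero_le
      rcases lt_or_ge t y with hty | hty
      · have h0 : t - y < 0 := by linarith
        rw [hB]; simp only [if_pos h0, mul_zero]; exact zero_le
      · rw [Set.indicator_of_mem (Set.mem_Icc.mpr ⟨hy, hty⟩), exponentialPDF_of_nonneg hy, hB]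
        simp only [if_neg (by linarith : ¬ t - y < 0)]
        rw [← ENNReal.ofReal_mul (by positivity)]
        apply ENNReal.ofReal_le_ofReal
        have hQ : (0:ℝ) ≤ (t - y) ^ n / (A ^ n * (Nat.factorial n : ℝ)) := by
          have : (0:ℝ) ≤ t - y := by linarith
          positivity
        have h1 : r * rexp (-(r * y)) ≤ 1 / A := by
          calc r * rexp (-(r * y)) ≤ r * 1 := by
                apply mul_le_mul_of_nonneg_left _ hrpos.le
                rw [Real.exp_le_one_iff]
                have : 0 ≤ r * y := mul_nonneg hrpos.le hy
                linarith
            _ ≤ 1 / A := by rw [mul_one, hr]; exact one_div_le_one_div_of_le hA (hmean i)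
        calc r * rexp (-(r * y)) * ((t - y) ^ n / (A ^ n * (Nat.factorial n : ℝ)))
            ≤ 1 / A * ((t - y) ^ n / (A ^ n * (Nat.factorial n : ℝ))) :=
              mul_le_mul_of_nonneg_right h1 hQ
          _ = (t - y) ^ n * C := by rw [hC]; ring
    have step4 : ∫⁻ y, exponentialPDF r y * B n (t - y) ∂volume ≤
        ∫⁻ y in Set.Icc 0 t, ENNReal.ofReal ((t - y) ^ n * C) ∂volume := by
      rw [← lintegral_indicator measurableSet_Icc]
      exact lintegral_mono hptwise
    have total : P {ω | ∑ j ∈ Finset.cons i s hi, E j ω ≤ t} ≤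
        ∫⁻ y in Set.Icc 0 t, ENNReal.ofReal ((t - y) ^ n * C) ∂volume := by
      rw [step1, step2]
      exact le_trans (le_trans (lintegral_mono slice) step3.le) step4
    by_cases ht : t < 0
    · rw [if_pos ht]
      rw [Set.Icc_eq_empty (by linarith : ¬ (0:ℝ) ≤ t), Measure.restrict_empty,
        lintegral_zero_measure] at total
      exact total
    · push_neg at ht
      rw [if_neg (not_lt.2 ht)]
      have hcont : Continuous (fun y : ℝ => (t - y) ^ n * C) := by continuity
      have heval : ∫⁻ y in Set.Icc 0 t, ENNReal.ofReal ((t - y) ^ n * C) ∂volume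
          = ENNReal.ofReal (∫ y in Set.Ioc 0 t, (t - y) ^ n * C) := by
        rw [← setLIntegral_congr Ioc_ae_eq_Icc,
          ← ofReal_integral_eq_lintegral_ofReal (hcont.integrableOn_Ioc)]
        refine (ae_restrict_iff' measurableSet_Ioc).mpr (ae_of_all _ fun y hy => ?_)
        have h1 : (0:ℝ) ≤ t - y := by linarith [hy.2]
        have h2 : (0:ℝ) ≤ C := by rw [hC]; positivity
        positivity
      have hval : ∫ y in Set.Ioc 0 t, (t - y) ^ n * C = t ^ (n+1) / (n+1) * C := by
        rw [← intervalIntegral.integral_of_le ht, intervalIntegral.integral_mul_const,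
          intervalIntegral.integral_comp_sub_left (fun y => y ^ n) t]
        simp [integral_pow]
      refine le_trans total ?_
      rw [heval, hval, Finset.card_cons]
      apply le_of_eq
      congr 1
      rw [hC, Nat.factorial_succ]
      have h2 : (0:ℝ) < (Nat.factorial n : ℝ) := by positivity
      push_cast
      rw [div_mul_div_comm, mul_one]
      congr 1
      ring


/-- Sharper lower tail bound for a sum of independent exponential random variables with
means at least `A > 0`: for `0 ≤ κ ≤ 1/4`,
`P(∑ Eᵢ ≤ κ·A·m) ≤ (4/(3√(2πm)))·(3κ)^m`. -/
theorem sum_exp_lower_tail_sharp {Ω : Type*} [MeasurableSpace Ω]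
    (P : Measure Ω) [IsProbabilityMeasure P]
    (m : ℕ) (hm : 0 < m) (E : Fin m → Ω → ℝ) (μ : Fin m → ℝ) (A : ℝ) (hA : 0 < A)
    (hmean : ∀ i, A ≤ μ i)
    (hmeas : ∀ i, Measurable (E i))
    (hindep : iIndepFun E P)
    (hdist : ∀ i, Measure.map (E i) P = expMeasure (1 / μ i))
    (κ : ℝ) (hκ0 : 0 ≤ κ) (hκ : κ ≤ 1 / 4) :
    P {ω | ∑ i, E i ω ≤ κ * A * m} ≤
      ENNReal.ofReal (4 / (3 * Real.sqrt (2 * Real.pi * m)) * (3 * κ) ^ m) := by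
  have key := key_bound P E μ A hA hmean hmeas hindep hdist Finset.univ (κ * A * m)
  simp only [Finset.card_univ, Fintype.card_fin] at key
  rw [if_neg (not_lt.2 (by positivity : (0:ℝ) ≤ κ * A * m))] at key
  exact key.trans (ENNReal.ofReal_le_ofReal (arith m hm κ A hκ0 hA))
end

section
/- For a positive integer m and real κ with 0 ≤ κ ≤ 1/4, the lower incomplete Gamma function satisfies γ(m, κm)/(m-1)! ≤ (4/3)·e^{-κm}·(κm)^m/m!. -/
open Real

/-- The lower incomplete Gamma function `γ(m, x) = ∫₀ˣ t^(m-1) e^(-t) dt`. -/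
noncomputable def lowerIncompleteGamma (m : ℕ) (x : ℝ) : ℝ :=
  ∫ t in (0:ℝ)..x, t ^ (m - 1) * Real.exp (-t)

open Nat in
lemma exp_eq_tsum' (x : ℝ) : Real.exp x = ∑' n : ℕ, x ^ n / n ! := by
  rw [Real.exp_eq_exp_ℝ, NormedSpace.exp_eq_tsum_div]

open Nat in
lemma hasDerivAt_aux (n : ℕ) (t : ℝ) :
    HasDerivAt (fun t : ℝ => -(Real.exp (-t) * ∑ k ∈ Finset.range (n+1), t ^ k / k !))
      (Real.exp (-t) * (t ^ n / n !)) t := by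
  have hS : HasDerivAt (fun t : ℝ => ∑ k ∈ Finset.range (n+1), t ^ k / k !)
      (∑ k ∈ Finset.range n, t ^ k / k !) t := by
    have : HasDerivAt (fun t : ℝ => ∑ k ∈ Finset.range (n+1), t ^ k / k !)
        (∑ k ∈ Finset.range (n+1), (k : ℝ) * t ^ (k - 1) / k !) t := by
      apply HasDerivAt.fun_sum
      intro k _
      simpa using (hasDerivAt_pow k t).div_const (k ! : ℝ)
    convert this using 1
    rw [Finset.sum_range_succ']
    simp only [Nat.cast_zero, zero_mul, zero_div, add_zero]
    apply Finset.sum_congr rfl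
    intro i _
    have : ((i+1)! : ℝ) = (i+1) * i ! := by
      rw [Nat.factorial_succ]; push_cast; ring
    field_simp [this]
    rw [Nat.add_sub_cancel, this]; push_cast; ring
  have hE : HasDerivAt (fun t : ℝ => Real.exp (-t)) (-Real.exp (-t)) t := by
    exact ((hasDerivAt_neg t).exp).congr_deriv (by ring)
  have := (hE.mul hS).neg
  refine this.congr_deriv ?_
  rw [Finset.sum_range_succ]
  ring

open Nat in
lemma lig_eq (n : ℕ) (x : ℝ) :
    lowerIncompleteGamma (n+1) x
      = (n ! : ℝ) * (1 - Real.exp (-x) * ∑ k ∈ Finset.range (n+1), x ^ k / k !) := by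
  have key : (∫ t in (0:ℝ)..x, Real.exp (-t) * (t ^ n / n !))
      = (-(Real.exp (-x) * ∑ k ∈ Finset.range (n+1), x ^ k / k !))
        - (-(Real.exp (-0) * ∑ k ∈ Finset.range (n+1), (0:ℝ) ^ k / k !)) := by
    apply intervalIntegral.integral_eq_sub_of_hasDerivAt
    · intro t _; exact hasDerivAt_aux n t
    · apply Continuous.intervalIntegrable
      continuity
  have h0 : (∑ k ∈ Finset.range (n+1), (0:ℝ) ^ k / k !) = 1 := by
    rw [Finset.sum_range_succ']
    simp
  unfold lowerIncompleteGamma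
  simp only [Nat.add_sub_cancel]
  have : (∫ t in (0:ℝ)..x, t ^ n * Real.exp (-t))
      = ∫ t in (0:ℝ)..x, Real.exp (-t) * (t ^ n / n !) * n ! := by
    congr 1; ext t
    field_simp
  rw [this, intervalIntegral.integral_mul_const, key, h0]
  simp
  ring

open Nat in
/-- For a positive integer `m` and `0 ≤ κ ≤ 1/4`,
`γ(m, κm)/(m-1)! ≤ (4/3)·e^(-κm)·(κm)^m/m!`. -/
theorem lowerIncompleteGamma_bound (m : ℕ) (hm : 0 < m) (κ : ℝ) (hκ0 : 0 ≤ κ)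
    (hκ : κ ≤ 1 / 4) :
    lowerIncompleteGamma m (κ * m) / (Nat.factorial (m - 1)) ≤
      (4 / 3) * Real.exp (-(κ * m)) * (κ * m) ^ m / (Nat.factorial m) := by
  
  obtain ⟨n, rfl⟩ : ∃ n, m = n + 1 := ⟨m - 1, (Nat.succ_pred_eq_of_pos hm).symm⟩
  simp only [Nat.add_sub_cancel]
  set m := n + 1
  set x : ℝ := κ * m with hx
  have hx0 : 0 ≤ x := by positivity
  have hxm : x ≤ (1/4) * m := by
    apply mul_le_mul_of_nonneg_right hκ (by positivity)
  rw [lig_eq n x]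
  rw [mul_div_cancel_left₀ _ (by positivity : (n ! : ℝ) ≠ 0)]
  -- LHS = 1 - exp(-x) * S
  have hsum := Real.summable_pow_div_factorial x
  have hexp : Real.exp x = ∑' k : ℕ, x ^ k / k ! := exp_eq_tsum' x
  have htail : (1 : ℝ) - Real.exp (-x) * ∑ k ∈ Finset.range m, x ^ k / k !
      = Real.exp (-x) * ∑' ℓ : ℕ, x ^ (m + ℓ) / (m + ℓ)! := by
    have h1 : (∑ k ∈ Finset.range m, x ^ k / k !) + (∑' ℓ : ℕ, x ^ (ℓ + m) / (ℓ + m)!)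
        = Real.exp x := by
      rw [hexp]
      exact Summable.sum_add_tsum_nat_add m hsum
    have h2 : (∑' ℓ : ℕ, x ^ (ℓ + m) / (ℓ + m)!) = ∑' ℓ : ℕ, x ^ (m + ℓ) / (m + ℓ)! := by
      congr 1; ext ℓ; rw [add_comm ℓ m]
    rw [← h2]
    have : (∑' ℓ : ℕ, x ^ (ℓ + m) / (ℓ + m)!) = Real.exp x - ∑ k ∈ Finset.range m, x ^ k / k ! := by
      linarith
    rw [this, Real.exp_neg]
    have he : Real.exp x > 0 := Real.exp_pos x
    field_simp
  rw [htail]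
  rw [show (4:ℝ)/3 * Real.exp (-x) * x ^ m / m ! = Real.exp (-x) * ((4/3) * x ^ m / m !) by ring]
  apply mul_le_mul_of_nonneg_left _ (Real.exp_nonneg _)
  -- key: ∑' ℓ, x^(m+ℓ)/(m+ℓ)! ≤ (4/3) x^m/m!
  have hterm : ∀ ℓ : ℕ, x ^ (m + ℓ) / (m + ℓ)! ≤ x ^ m / m ! * (1/4) ^ ℓ := by
    intro ℓ
    have hfac : (m ! : ℝ) * (m : ℝ) ^ ℓ ≤ ((m + ℓ)! : ℝ) := by
      have := Nat.factorial_mul_pow_le_factorial (m := m) (n := ℓ)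
      calc (m ! : ℝ) * (m : ℝ) ^ ℓ ≤ (m ! : ℝ) * ((m : ℝ) + 1) ^ ℓ := by
            apply mul_le_mul_of_nonneg_left _ (by positivity)
            apply pow_le_pow_left₀ (by positivity) (by linarith)
        _ = ((m ! * (m + 1) ^ ℓ : ℕ) : ℝ) := by push_cast; ring
        _ ≤ _ := by exact_mod_cast this
    have hxl : x ^ ℓ ≤ ((1/4) * m) ^ ℓ := pow_le_pow_left₀ hx0 hxm ℓ
    rw [pow_add]
    rw [div_le_iff₀ (by positivity)]
    have hmfpos : (0:ℝ) < m ! := by positivity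
    have : x ^ m / m ! * (1/4) ^ ℓ * ((m + ℓ)! : ℝ)
        ≥ x ^ m / m ! * (1/4) ^ ℓ * ((m ! : ℝ) * (m:ℝ) ^ ℓ) := by
      apply mul_le_mul_of_nonneg_left hfac (by positivity)
    calc x ^ m * x ^ ℓ ≤ x ^ m * ((1/4) * m) ^ ℓ := by
          apply mul_le_mul_of_nonneg_left hxl (by positivity)
      _ = x ^ m / m ! * (1/4) ^ ℓ * ((m ! : ℝ) * (m:ℝ) ^ ℓ) := by
          field_simp
          ring
      _ ≤ _ := this
  have hgeo : ∑' ℓ : ℕ, x ^ m / m ! * (1/4 : ℝ) ^ ℓ = x ^ m / m ! * (4/3) := by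
    rw [tsum_mul_left, tsum_geometric_of_lt_one (by norm_num) (by norm_num)]
    norm_num
  have hsum2 : Summable (fun ℓ : ℕ => x ^ (m + ℓ) / ((m + ℓ)! : ℝ)) := by
    have : (fun ℓ : ℕ => x ^ (m + ℓ) / ((m + ℓ)! : ℝ)) = fun ℓ => x ^ (ℓ + m) / ((ℓ + m)! : ℝ) := by
      ext ℓ; rw [add_comm m ℓ]
    rw [this]
    exact (summable_nat_add_iff m).mpr hsum |>.congr (fun ℓ => rfl) |>.congr (fun ℓ => rfl)
  calc (∑' ℓ : ℕ, x ^ (m + ℓ) / (m + ℓ)!)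
      ≤ ∑' ℓ : ℕ, x ^ m / m ! * (1/4 : ℝ) ^ ℓ := by
        apply Summable.tsum_le_tsum hterm hsum2
        exact Summable.mul_left _ (summable_geometric_of_lt_one (by norm_num) (by norm_num))
    _ = x ^ m / m ! * (4/3) := hgeo
    _ = 4/3 * x ^ m / m ! := by ring
end

section
/- Let k ≥ 3, δ ≤ 1/2 with δ > 0, A > 0, M ≥ 18, and let R₁, R₂, ... be independent exponential random variables with means A, A/r, A/r², ..., where r = 1 + δ/log k. Then for all sufficiently large k, P(∑_{i=1}^∞ R_i ≥ M·A·log k/δ) ≤ 2/k^{M/(12δ)+3}. -/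
open MeasureTheory ProbabilityTheory Real

namespace SumGeomExpAux

lemma aux_integral_exp {b : ℝ} (hb : 0 < b) :
    ∫ x in Set.Ioi (0:ℝ), rexp (-(b * x)) = 1 / b := by
  have h := integral_rpow_mul_exp_neg_mul_Ioi (a := 1) one_pos hb
  simpa using h

lemma lintegral_ofReal_exp_expMeasure {lam t : ℝ} (hlam : 0 < lam) (ht : t < lam) :
    ∫⁻ x, ENNReal.ofReal (rexp (t * x)) ∂(expMeasure lam)
      = ENNReal.ofReal (lam / (lam - t)) := by
  have hb : 0 < lam - t := by linarith
  set g : ℝ → ℝ := fun x => if 0 ≤ x then lam * rexp (-((lam - t) * x)) else 0 with hg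
  have hpdf : Measurable (exponentialPDF lam) :=
    (measurable_exponentialPDFReal lam).ennreal_ofReal
  have hme : Measurable fun x : ℝ => ENNReal.ofReal (rexp (t * x)) :=
    ((measurable_id.const_mul t).exp).ennreal_ofReal
  have hmeq : expMeasure lam = volume.withDensity (exponentialPDF lam) := rfl
  rw [hmeq, lintegral_withDensity_eq_lintegral_mul volume hpdf hme]
  have hpt : ∀ x : ℝ, (exponentialPDF lam * fun x => ENNReal.ofReal (rexp (t * x))) x
      = ENNReal.ofReal (g x) := by
    intro x
    simp only [Pi.mul_apply, hg]
    rcases le_or_gt 0 x with hx | hx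
    · rw [if_pos hx, exponentialPDF_of_nonneg hx, ← ENNReal.ofReal_mul (by positivity)]
      congr 1
      rw [mul_assoc, ← Real.exp_add]
      ring_nf
    · rw [if_neg (not_le.2 hx), exponentialPDF_of_neg hx, zero_mul, ENNReal.ofReal_zero]
  simp_rw [hpt]
  have hgind : g = (Set.Ici (0:ℝ)).indicator (fun x => lam * rexp (-((lam - t) * x))) := by
    ext x; simp [hg, Set.indicator_apply, Set.mem_Ici]
  have hgint : Integrable g := by
    rw [hgind, integrable_indicator_iff measurableSet_Ici,
      integrableOn_Ici_iff_integrableOn_Ioi]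
    have he : (fun x : ℝ => lam * rexp (-((lam - t) * x))) = fun x : ℝ => lam * rexp (-(lam - t) * x) := by
      funext x; rw [neg_mul]
    rw [he]
    exact (exp_neg_integrableOn_Ioi 0 hb).const_mul lam
  have hgnn : ∀ x, 0 ≤ g x := by
    intro x; rw [hg]; dsimp only; split <;> positivity
  rw [← ofReal_integral_eq_lintegral_ofReal hgint (Filter.Eventually.of_forall hgnn)]
  congr 1
  rw [hgind, integral_indicator measurableSet_Ici, integral_Ici_eq_integral_Ioi,
    integral_const_mul, aux_integral_exp hb, mul_one_div]

lemma integrable_exp_expMeasure {lam t : ℝ} (hlam : 0 < lam) (ht : t < lam) :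
    Integrable (fun x => rexp (t * x)) (expMeasure lam) := by
  constructor
  · exact Measurable.aestronglyMeasurable ((measurable_id.const_mul t).exp)
  · rw [hasFiniteIntegral_iff_ofReal (Filter.Eventually.of_forall fun x => (exp_pos _).le),
      lintegral_ofReal_exp_expMeasure hlam ht]
    exact ENNReal.ofReal_lt_top

lemma integral_exp_expMeasure {lam t : ℝ} (hlam : 0 < lam) (ht : t < lam) :
    ∫ x, rexp (t * x) ∂(expMeasure lam) = lam / (lam - t) := by
  have hb : 0 < lam - t := by linarith
  have hms : AEStronglyMeasurable (fun x : ℝ => rexp (t * x)) (expMeasure lam) :=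
    Measurable.aestronglyMeasurable ((measurable_id.const_mul t).exp)
  rw [integral_eq_lintegral_of_nonneg_ae (Filter.Eventually.of_forall fun x => (exp_pos _).le)
      hms,
    lintegral_ofReal_exp_expMeasure hlam ht, ENNReal.toReal_ofReal (by positivity)]

lemma expMeasure_Iio_zero {lam : ℝ} : expMeasure lam (Set.Iio 0) = 0 := by
  have hmeq : expMeasure lam = volume.withDensity (exponentialPDF lam) := rfl
  rw [hmeq, withDensity_apply _ measurableSet_Iio]
  exact lintegral_exponentialPDF_of_nonpos le_rfl

end SumGeomExpAux


/-- Upper tail bound for a geometric sequence of independent exponential random variables: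
with `r = 1 + δ/log k`, `0 < δ ≤ 1/2`, `A > 0`, `M ≥ 18`, and independent exponentials
`R₁, R₂, …` with means `A, A/r, A/r², …`, for all sufficiently large `k ≥ 3`,
`P(∑ᵢ Rᵢ ≥ M·A·log k/δ) ≤ 2/k^(M/(12δ)+3)`. -/
theorem sum_geometric_exp_upper_tail (δ A M : ℝ) (hδ : 0 < δ) (hδ' : δ ≤ 1 / 2)
    (hA : 0 < A) (hM : 18 ≤ M) :
    ∃ k₀ : ℝ, 3 ≤ k₀ ∧ ∀ k : ℝ, k₀ ≤ k →
      ∀ (Ω : Type) (_ : MeasurableSpace Ω) (P : Measure Ω), IsProbabilityMeasure P →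
        ∀ R : ℕ → Ω → ℝ, (∀ i, Measurable (R i)) →
          iIndepFun R P →
          (∀ i : ℕ, Measure.map (R i) P = expMeasure ((1 + δ / Real.log k) ^ i / A)) →
          P {ω | M * A * Real.log k / δ ≤ ∑' i, R i ω} ≤
            ENNReal.ofReal (2 / k ^ (M / (12 * δ) + 3)) := by
  refine ⟨3, le_rfl, fun k hk Ω mΩ P hP R hmeasR hindep hmap => ?_⟩
  haveI := hP
  have hk0 : (0:ℝ) < k := by linarith
  have hlogk : 1 ≤ Real.log k := by
    rw [Real.le_log_iff_exp_le hk0]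
    exact le_trans (Real.exp_one_lt_d9.le.trans (by norm_num)) hk
  have hlogk0 : 0 < Real.log k := by linarith
  set L : ℝ := Real.log k / δ with hLdef
  have hL : 2 ≤ L := by
    rw [hLdef, le_div_iff₀ hδ]; linarith
  have hL0 : 0 < L := by linarith
  have hLne : L ≠ 0 := hL0.ne'
  have hL1ne : L + 1 ≠ 0 := by positivity
  set r : ℝ := 1 + δ / Real.log k with hrdef
  have hdl : δ / Real.log k = 1 / L := by
    rw [hLdef, one_div_div]
  have hr1 : 1 < r := by
    have h1L : 0 < 1 / L := by positivity
    rw [hrdef, hdl]; linarith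
  have hr0 : 0 < r := by linarith
  have hrL : r = (L + 1) / L := by
    rw [hrdef, hdl]; field_simp
  set T : ℝ := M * A * Real.log k / δ with hTdef
  have hTL : T = M * A * L := by rw [hTdef, hLdef]; ring
  have hM0 : (0:ℝ) < M := by linarith
  have hT0 : 0 < T := by rw [hTL]; positivity
  set t : ℝ := 1 / (2 * A) with htdef
  have ht0 : 0 < t := by rw [htdef]; positivity
  have hAne : A ≠ 0 := hA.ne'
  have hrpow : ∀ i : ℕ, 1 ≤ r ^ i := fun i => one_le_pow₀ hr1.le
  have hlam : ∀ i : ℕ, 0 < r ^ i / A := fun i => div_pos (pow_pos hr0 i) hA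
  have htlam : ∀ i : ℕ, t < r ^ i / A := by
    intro i
    rw [htdef, div_lt_div_iff₀ (by positivity) hA]
    nlinarith [hrpow i]
  -- integrability of exp(t * R i)
  have hint : ∀ i : ℕ, Integrable (fun ω => rexp (t * R i ω)) P := by
    intro i
    have h1 : Integrable (fun x => rexp (t * x)) (Measure.map (R i) P) := by
      rw [hmap i]
      exact SumGeomExpAux.integrable_exp_expMeasure (hlam i) (htlam i)
    exact (integrable_map_measure
      (Measurable.aestronglyMeasurable ((measurable_id.const_mul t).exp))
      (hmeasR i).aemeasurable).mp h1
  -- mgf bound per coordinate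
  have hmgf : ∀ i : ℕ, mgf (R i) P t ≤ rexp ((1 / r) ^ i) := by
    intro i
    have hsm : AEStronglyMeasurable (fun x : ℝ => rexp (t * x)) (Measure.map (R i) P) :=
      Measurable.aestronglyMeasurable ((measurable_id.const_mul t).exp)
    have h2 := integral_map (hmeasR i).aemeasurable hsm
    have hmi : mgf (R i) P t = (r ^ i / A) / (r ^ i / A - t) := by
      calc mgf (R i) P t = ∫ ω, rexp (t * R i ω) ∂P := rfl
        _ = ∫ x, rexp (t * x) ∂(Measure.map (R i) P) := h2.symm
        _ = (r ^ i / A) / (r ^ i / A - t) := by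
            rw [hmap i]; exact SumGeomExpAux.integral_exp_expMeasure (hlam i) (htlam i)
    rw [hmi]
    have hy : 1 ≤ r ^ i := hrpow i
    have hyne : r ^ i ≠ 0 := by positivity
    have hpow1 : (1 / r) ^ i = 1 / r ^ i := by rw [div_pow, one_pow]
    have hc : 1 / r ^ i + 1 ≤ rexp ((1 / r) ^ i) := by
      rw [hpow1]; exact Real.add_one_le_exp _
    have hden : 0 < r ^ i / A - t := by linarith [htlam i]
    rw [div_le_iff₀ hden]
    have step : r ^ i / A ≤ (1 / r ^ i + 1) * (r ^ i / A - t) := by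
      have expand : (1 / r ^ i + 1) * (r ^ i / A - t) - r ^ i / A
          = (1 / (2 * A)) * (1 - 1 / r ^ i) := by
        rw [htdef]; field_simp; ring
      have h1y : 1 / r ^ i ≤ 1 := by
        rw [div_le_one (by positivity)]; exact hy
      nlinarith [expand]
    refine step.trans ?_
    exact mul_le_mul_of_nonneg_right hc hden.le
  -- geometric sum bound
  have hsum_geo : ∀ n : ℕ, ∑ i ∈ Finset.range n, (1 / r) ^ i ≤ L + 1 := by
    intro n
    have h0 : (0:ℝ) ≤ 1 / r := by positivity
    have h1 : (1:ℝ) / r < 1 := by rw [div_lt_one hr0]; exact hr1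
    have hle := Summable.sum_le_tsum (Finset.range n) (fun i _ => pow_nonneg h0 i)
      (summable_geometric_of_lt_one h0 h1)
    rw [tsum_geometric_of_lt_one h0 h1] at hle
    refine hle.trans ?_
    have he : 1 - 1 / r = 1 / (L + 1) := by
      rw [hrL]; field_simp; ring
    rw [he, one_div, inv_inv]
  -- Chernoff bound, uniform in n
  have chern : ∀ n : ℕ,
      (P {ω | T / 2 ≤ ∑ i ∈ Finset.range n, R i ω}).toReal ≤ rexp (L + 1 - M * L / 4) := by
    intro n
    have hXint : Integrable (fun ω => rexp (t * (∑ i ∈ Finset.range n, R i) ω)) P :=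
      hindep.integrable_exp_mul_sum hmeasR (fun i _ => hint i)
    have h := measure_ge_le_exp_mul_mgf (μ := P) (X := ∑ i ∈ Finset.range n, R i)
      (T / 2) ht0.le hXint
    have hset : {ω | T / 2 ≤ (∑ i ∈ Finset.range n, R i) ω}
        = {ω | T / 2 ≤ ∑ i ∈ Finset.range n, R i ω} := by
      simp only [Finset.sum_apply]
    rw [hset] at h
    refine h.trans ?_
    rw [hindep.mgf_sum hmeasR]
    have hp : ∏ i ∈ Finset.range n, mgf (R i) P t ≤ rexp (L + 1) := by
      calc ∏ i ∈ Finset.range n, mgf (R i) P t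
          ≤ ∏ i ∈ Finset.range n, rexp ((1 / r) ^ i) :=
            Finset.prod_le_prod (fun i _ => mgf_nonneg) (fun i _ => hmgf i)
        _ = rexp (∑ i ∈ Finset.range n, (1 / r) ^ i) := (Real.exp_sum _ _).symm
        _ ≤ rexp (L + 1) := Real.exp_le_exp.2 (hsum_geo n)
    have hfac : -t * (T / 2) = -(M * L / 4) := by
      rw [htdef, hTL]; field_simp; ring
    calc rexp (-t * (T / 2)) * ∏ i ∈ Finset.range n, mgf (R i) P t
        ≤ rexp (-t * (T / 2)) * rexp (L + 1) :=
          mul_le_mul_of_nonneg_left hp (Real.exp_pos _).le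
      _ = rexp (L + 1 - M * L / 4) := by
          rw [hfac, ← Real.exp_add]; congr 1; ring
  -- numeric bound
  have hnum : rexp (L + 1 - M * L / 4) ≤ 2 / k ^ (M / (12 * δ) + 3) := by
    have hlogL : Real.log k = δ * L := by rw [hLdef]; field_simp
    have key : L + 1 - M * L / 4 ≤ -(Real.log k * (M / (12 * δ) + 3)) := by
      rw [hlogL]
      have e1 : δ * L * (M / (12 * δ) + 3) = M * L / 12 + 3 * (δ * L) := by
        field_simp
      rw [e1]
      nlinarith [mul_le_mul_of_nonneg_right hδ' hL0.le,
        mul_le_mul_of_nonneg_right hM (show (0:ℝ) ≤ L / 6 by positivity)]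
    calc rexp (L + 1 - M * L / 4) ≤ rexp (-(Real.log k * (M / (12 * δ) + 3))) :=
          Real.exp_le_exp.2 key
      _ = 1 / k ^ (M / (12 * δ) + 3) := by
          rw [Real.rpow_def_of_pos hk0, Real.exp_neg, one_div]
      _ ≤ 2 / k ^ (M / (12 * δ) + 3) := by
          have hkp : (0:ℝ) < k ^ (M / (12 * δ) + 3) := Real.rpow_pos_of_pos hk0 _
          gcongr
          norm_num
  -- a.s. nonnegativity
  have hnn : ∀ᵐ ω ∂P, ∀ i, 0 ≤ R i ω := by
    rw [MeasureTheory.ae_all_iff]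
    intro i
    rw [ae_iff]
    have hset : {ω | ¬ 0 ≤ R i ω} = R i ⁻¹' Set.Iio 0 := by
      ext ω; simp [not_le]
    rw [hset, ← Measure.map_apply (hmeasR i) measurableSet_Iio, hmap i]
    exact SumGeomExpAux.expMeasure_Iio_zero
  set G : Set Ω := {ω | ∀ i, 0 ≤ R i ω} with hGdef
  have hGc : P Gᶜ = 0 := by
    have h := ae_iff.mp hnn
    simpa [hGdef, Set.compl_setOf] using h
  have hmono : Monotone (fun n => {ω | T / 2 ≤ ∑ i ∈ Finset.range n, R i ω} ∩ G) := by
    intro a b hab ω hω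
    have h1 : T / 2 ≤ ∑ i ∈ Finset.range a, R i ω := hω.1
    have h2 : ∑ i ∈ Finset.range a, R i ω ≤ ∑ i ∈ Finset.range b, R i ω :=
      Finset.sum_le_sum_of_subset_of_nonneg (Finset.range_subset_range.2 hab)
        (fun i _ _ => hω.2 i)
    exact ⟨show T / 2 ≤ ∑ i ∈ Finset.range b, R i ω from le_trans h1 h2, hω.2⟩
  have hsub : {ω | T ≤ ∑' i, R i ω} ∩ G ⊆
      ⋃ n, ({ω | T / 2 ≤ ∑ i ∈ Finset.range n, R i ω} ∩ G) := by
    intro ω hω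
    obtain ⟨hT', hG⟩ := hω
    have hsummable : Summable fun i => R i ω := by
      by_contra hns
      rw [Set.mem_setOf_eq, tsum_eq_zero_of_not_summable hns] at hT'
      linarith
    have hlim := hsummable.hasSum.tendsto_sum_nat
    have hT'' : T ≤ ∑' i, R i ω := hT'
    obtain ⟨n, hn⟩ :=
      (hlim.eventually (eventually_ge_nhds (show T / 2 < ∑' i, R i ω by linarith))).exists
    exact Set.mem_iUnion.2 ⟨n, hn, hG⟩
  calc P {ω | T ≤ ∑' i, R i ω}
      ≤ P (({ω | T ≤ ∑' i, R i ω} ∩ G) ∪ Gᶜ) := measure_mono (fun ω h => by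
        by_cases hg : ω ∈ G
        · exact Or.inl ⟨h, hg⟩
        · exact Or.inr hg)
    _ ≤ P ({ω | T ≤ ∑' i, R i ω} ∩ G) + P Gᶜ := measure_union_le _ _
    _ = P ({ω | T ≤ ∑' i, R i ω} ∩ G) := by rw [hGc, add_zero]
    _ ≤ P (⋃ n, ({ω | T / 2 ≤ ∑ i ∈ Finset.range n, R i ω} ∩ G)) := measure_mono hsub
    _ = ⨆ n, P ({ω | T / 2 ≤ ∑ i ∈ Finset.range n, R i ω} ∩ G) :=
        hmono.directed_le.measure_iUnion
    _ ≤ ENNReal.ofReal (rexp (L + 1 - M * L / 4)) := by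
        refine iSup_le fun n => ?_
        refine (measure_mono Set.inter_subset_left).trans ?_
        rw [← ENNReal.ofReal_toReal (measure_ne_top P _)]
        exact ENNReal.ofReal_le_ofReal (chern n)
    _ ≤ ENNReal.ofReal (2 / k ^ (M / (12 * δ) + 3)) := ENNReal.ofReal_le_ofReal hnum
end
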